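/- For cos t, sin t ∈ (0,1) with cos²t + sin²t = 1, the algebra A_{cos t}^+ is isomorphic to the algebra with structural constants matrix [[1/2, 0, 0, 1],[0, −sin t/(2cos t), 1/2, 0]], via the basis change e_1* = (1/(4cos t))(e_1 + e_2), e_2* = (1/(2√(sin 2t)))(e_1 − e_2). -/

import Mathlib

/-- Multiplication on ℝ² determined by structural constants `c`. -/
def amul (c : Fin 2 → Fin 2 → Fin 2 → ℝ) (x y : Fin 2 → ℝ) : Fin 2 → ℝ :=
  fun k => ∑ i : Fin 2, ∑ j : Fin 2, x i * y j * c i j k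

/-- Structural constants of the algebra A_c^{(s)} of the rotational flow. -/
def cAc (c s : ℝ) : Fin 2 → Fin 2 → Fin 2 → ℝ :=
  ![![![c, s], ![c, -s]], ![![-s, c], ![s, c]]]

/-- Structural constants of 𝒜₂(1/2, 0, -s/(2c)), i.e. the structural constants matrix
[[1/2, 0, 0, 1], [0, -s/(2c), 1/2, 0]]. -/
noncomputable def cB (c s : ℝ) : Fin 2 → Fin 2 → Fin 2 → ℝ :=
  ![![![1/2, 0], ![0, -s/(2*c)]], ![![0, 1/2], ![1, 0]]]

noncomputable def Mm (c r : ℝ) : Matrix (Fin 2) (Fin 2) ℝ :=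
  ![![1/(4*c), 1/(2*r)], ![1/(4*c), -(1/(2*r))]]

noncomputable def Nm (c r : ℝ) : Matrix (Fin 2) (Fin 2) ℝ :=
  ![![2*c, 2*c], ![r, -r]]

lemma mul_MN (c r : ℝ) (hc : c ≠ 0) (hr : r ≠ 0) : Mm c r * Nm c r = 1 := by
  ext i j
  rw [Matrix.mul_apply]
  fin_cases i <;> fin_cases j <;>
    simp [Mm, Nm, Matrix.mul_apply, Fin.sum_univ_two, Matrix.one_apply] <;> field_simp <;> ring

lemma mul_NM (c r : ℝ) (hc : c ≠ 0) (hr : r ≠ 0) : Nm c r * Mm c r = 1 := by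
  ext i j
  rw [Matrix.mul_apply]
  fin_cases i <;> fin_cases j <;>
    simp [Mm, Nm, Matrix.mul_apply, Fin.sum_univ_two, Matrix.one_apply] <;> field_simp <;> ring

lemma key (c s r : ℝ) (hc : c ≠ 0) (hs : s ≠ 0) (hr : r ≠ 0) (hr2 : r^2 = 2*s*c)
    (x y : Fin 2 → ℝ) :
    (Mm c r).mulVec (amul (cB c s) x y)
      = amul (cAc c s) ((Mm c r).mulVec x) ((Mm c r).mulVec y) := by
  funext k
  fin_cases k
  · simp [Mm, amul, cB, cAc, Matrix.mulVec, dotProduct, Fin.sum_univ_two]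
    field_simp
    ring_nf
    linear_combination (16 * c * x 1 * y 1) * hr2
  · simp [Mm, amul, cB, cAc, Matrix.mulVec, dotProduct, Fin.sum_univ_two]
    field_simp
    ring_nf
    linear_combination (16 * c * x 1 * y 1) * hr2

/-- For cos t, sin t ∈ (0,1) with cos²t + sin²t = 1, the algebra A_{cos t}⁺ is isomorphic
to 𝒜₂(1/2, 0, -sin t/(2 cos t)) via the basis change
e₁* = (1/(4 cos t))(e₁ + e₂), e₂* = (1/(2√(sin 2t)))(e₁ - e₂). -/
theorem stmt_16 (t : ℝ)
    (hc : Real.cos t ∈ Set.Ioo (0 : ℝ) 1) (hs : Real.sin t ∈ Set.Ioo (0 : ℝ) 1)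
    (hpyth : Real.cos t ^ 2 + Real.sin t ^ 2 = 1) :
    ∃ f : (Fin 2 → ℝ) ≃ₗ[ℝ] (Fin 2 → ℝ),
      f ![1, 0] = ![1 / (4 * Real.cos t), 1 / (4 * Real.cos t)] ∧
      f ![0, 1] = ![1 / (2 * Real.sqrt (Real.sin (2 * t))),
                    -(1 / (2 * Real.sqrt (Real.sin (2 * t))))] ∧
      ∀ x y : Fin 2 → ℝ,
        f (amul (cB (Real.cos t) (Real.sin t)) x y) =
          amul (cAc (Real.cos t) (Real.sin t)) (f x) (f y) := by
  set c := Real.cos t with hc'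
  set s := Real.sin t with hs'
  have hc0 : c ≠ 0 := ne_of_gt hc.1
  have hs0 : s ≠ 0 := ne_of_gt hs.1
  have h2t : Real.sin (2 * t) = 2 * s * c := Real.sin_two_mul t ▸ by ring
  have hpos : 0 < Real.sin (2 * t) := by
    rw [h2t]; nlinarith [hs.1, hc.1]
  set r := Real.sqrt (Real.sin (2 * t)) with hr'
  have hr2 : r ^ 2 = 2 * s * c := by
    rw [hr', Real.sq_sqrt hpos.le]; exact h2t
  have hr0 : r ≠ 0 := ne_of_gt (Real.sqrt_pos.mpr hpos)
  refine ⟨LinearEquiv.ofLinear (Matrix.toLin' (Mm c r)) (Matrix.toLin' (Nm c r))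
    (by rw [← Matrix.toLin'_mul, mul_MN c r hc0 hr0, Matrix.toLin'_one])
    (by rw [← Matrix.toLin'_mul, mul_NM c r hc0 hr0, Matrix.toLin'_one]), ?_, ?_, ?_⟩
  · funext i
    rw [LinearEquiv.ofLinear_apply, Matrix.toLin'_apply]
    fin_cases i <;>
      simp [Mm, Matrix.toLin'_apply, Matrix.mulVec, dotProduct, Fin.sum_univ_two]
  · funext i
    rw [LinearEquiv.ofLinear_apply, Matrix.toLin'_apply]
    fin_cases i <;>
      simp [Mm, Matrix.toLin'_apply, Matrix.mulVec, dotProduct, Fin.sum_univ_two]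
  · intro x y
    simpa [Matrix.toLin'_apply] using key c s r hc0 hs0 hr0 hr2 x y
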